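/- The class K_P has the joint embedding property and the amalgamation property. -/

import Mathlib

open FirstOrder Language Structure CategoryTheory

/-- The language `L₀` with a `2n`-ary relation symbol `E_n` for each `n ≥ 1`. -/
def L₀ : FirstOrder.Language where
  Functions := fun _ => Empty
  Relations := fun k => {n : ℕ // 0 < n ∧ k = n + n}

/-- The relation symbol `E_n`. -/
def Esymb (n : ℕ) (hn : 0 < n) : L₀.Relations (n + n) := ⟨n, hn, rfl⟩

/-- `E_n(x̄, ȳ)` in an `L₀`-structure. -/
def ERel (M : Type*) [L₀.Structure M] (n : ℕ) (hn : 0 < n) (x y : Fin n → M) : Prop :=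
  Structure.RelMap (Esymb n hn) (Fin.append x y)

/-- The defining conditions for membership in `K₀`: each `E_n` holds only on pairs of
injective `n`-tuples, is invariant under permuting the entries of each tuple separately,
and induces an equivalence relation on `n`-element subsets. -/
def IsK0Struct (C : Type*) [L₀.Structure C] : Prop :=
  ∀ (n : ℕ) (hn : 0 < n),
    (∀ x y : Fin n → C, ERel C n hn x y → Function.Injective x ∧ Function.Injective y) ∧
    (∀ (x y : Fin n → C) (σ τ : Equiv.Perm (Fin n)),
        ERel C n hn x y → ERel C n hn (x ∘ σ) (y ∘ τ)) ∧
    (∀ x : Fin n → C, Function.Injective x → ERel C n hn x x) ∧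
    (∀ x y : Fin n → C, ERel C n hn x y → ERel C n hn y x) ∧
    (∀ x y z : Fin n → C, ERel C n hn x y → ERel C n hn y z → ERel C n hn x z)

/-- The class `K₀` of finite `L₀`-structures as above. -/
def K₀ : Set (Bundled L₀.Structure) := {C | Finite C ∧ IsK0Struct C}

/-- The language `L_P`: a `2n`-ary symbol `E_n` for each `n ≥ 1` and a `2n`-ary symbol
`<_n` for each `n ∈ P`. -/
def LP (P : Set ℕ) : FirstOrder.Language where
  Functions := fun _ => Empty
  Relations := fun k => {n : ℕ // 0 < n ∧ k = n + n} ⊕ {n : ℕ // n ∈ P ∧ k = n + n}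

/-- The symbol `E_n` of `L_P`. -/
def EsymbP (P : Set ℕ) (n : ℕ) (hn : 0 < n) : (LP P).Relations (n + n) :=
  Sum.inl ⟨n, hn, rfl⟩

/-- The symbol `<_n` of `L_P`. -/
def LTsymbP (P : Set ℕ) (n : ℕ) (hn : n ∈ P) : (LP P).Relations (n + n) :=
  Sum.inr ⟨n, hn, rfl⟩

/-- `E_n(x̄, ȳ)` in an `L_P`-structure. -/
def ERelP (P : Set ℕ) (M : Type*) [i : (LP P).Structure M] (n : ℕ) (hn : 0 < n)
    (x y : Fin n → M) : Prop :=
  @Structure.RelMap (LP P) M i (n + n) (EsymbP P n hn) (Fin.append x y)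

/-- `x̄ <_n ȳ` in an `L_P`-structure. -/
def LTRelP (P : Set ℕ) (M : Type*) [i : (LP P).Structure M] (n : ℕ) (hn : n ∈ P)
    (x y : Fin n → M) : Prop :=
  @Structure.RelMap (LP P) M i (n + n) (LTsymbP P n hn) (Fin.append x y)

/-- The defining conditions for membership in `K_P`: the `{E_n}`-part satisfies the
`K₀`-conditions, and for `n ∈ P` the relation `<_n` holds only on injective tuples, is
`E_n`-invariant, and induces a strict linear order on `E_n`-classes. -/
def IsKPStruct (P : Set ℕ) (C : Type*) [(LP P).Structure C] : Prop :=
  (∀ (n : ℕ) (hn : 0 < n),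
    (∀ x y : Fin n → C, ERelP P C n hn x y → Function.Injective x ∧ Function.Injective y) ∧
    (∀ (x y : Fin n → C) (σ τ : Equiv.Perm (Fin n)),
        ERelP P C n hn x y → ERelP P C n hn (x ∘ σ) (y ∘ τ)) ∧
    (∀ x : Fin n → C, Function.Injective x → ERelP P C n hn x x) ∧
    (∀ x y : Fin n → C, ERelP P C n hn x y → ERelP P C n hn y x) ∧
    (∀ x y z : Fin n → C, ERelP P C n hn x y → ERelP P C n hn y z → ERelP P C n hn x z)) ∧
  (∀ (n : ℕ) (hn : n ∈ P) (hn0 : 0 < n),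
    (∀ x y : Fin n → C, LTRelP P C n hn x y → Function.Injective x ∧ Function.Injective y) ∧
    (∀ x x' y y' : Fin n → C, ERelP P C n hn0 x x' → ERelP P C n hn0 y y' →
        LTRelP P C n hn x y → LTRelP P C n hn x' y') ∧
    (∀ x y : Fin n → C, LTRelP P C n hn x y → ¬ ERelP P C n hn0 x y) ∧
    (∀ x y z : Fin n → C, LTRelP P C n hn x y → LTRelP P C n hn y z → LTRelP P C n hn x z) ∧
    (∀ x y : Fin n → C, Function.Injective x → Function.Injective y →
        ¬ ERelP P C n hn0 x y → LTRelP P C n hn x y ∨ LTRelP P C n hn y x))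

/-- The class `K_P` of finite `L_P`-structures as above. -/
def KP (P : Set ℕ) : Set (Bundled (LP P).Structure) := {C | Finite C ∧ IsKPStruct P C}

set_option linter.unusedSectionVars false
set_option linter.unusedVariables false

section Helpers
variable {α β : Type*}

lemma comp_append (h : α → β) {m n : ℕ} (x : Fin m → α) (y : Fin n → α) :
    h ∘ Fin.append x y = Fin.append (h ∘ x) (h ∘ y) := by
  funext i
  refine Fin.addCases (fun j => ?_) (fun j => ?_) i <;>
    simp [Fin.append_left, Fin.append_right]

lemma append_decomp {n : ℕ} (t : Fin (n + n) → α) :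
    Fin.append (fun i => t (Fin.castAdd n i)) (fun i => t (Fin.natAdd n i)) = t := by
  funext i
  refine Fin.addCases (fun j => by rw [Fin.append_left]) (fun j => ?_) i
  rw [Fin.append_right]

lemma inj_comp_iff {ι : α → β} (hι : Function.Injective ι) {n : ℕ} (x : Fin n → α) :
    Function.Injective (ι ∘ x) ↔ Function.Injective x :=
  ⟨fun h i j hij => h (by simp only [Function.comp_apply, hij]), fun h => hι.comp h⟩

end Helpers

section Emb
variable {S : Set ℕ} {A B : Type*} [(LP S).Structure A] [(LP S).Structure B]

lemma emb_E (f : A ↪[LP S] B) {n : ℕ} (hn : 0 < n) (x y : Fin n → A) :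
    ERelP S B n hn (f ∘ x) (f ∘ y) ↔ ERelP S A n hn x y := by
  unfold ERelP
  rw [← comp_append, f.map_rel]

lemma emb_LT (f : A ↪[LP S] B) {n : ℕ} (hn : n ∈ S) (x y : Fin n → A) :
    LTRelP S B n hn (f ∘ x) (f ∘ y) ↔ LTRelP S A n hn x y := by
  unfold LTRelP
  rw [← comp_append, f.map_rel]

end Emb
section Accessors
variable {S : Set ℕ} {D : Type*} [(LP S).Structure D] (hD : IsKPStruct S D)
include hD

lemma E_inj {n : ℕ} {hn : 0 < n} {x y : Fin n → D} (h : ERelP S D n hn x y) :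
    Function.Injective x ∧ Function.Injective y := (hD.1 n hn).1 x y h

lemma E_perm {n : ℕ} {hn : 0 < n} {x y : Fin n → D} (σ τ : Equiv.Perm (Fin n))
    (h : ERelP S D n hn x y) : ERelP S D n hn (x ∘ σ) (y ∘ τ) := (hD.1 n hn).2.1 x y σ τ h

lemma E_refl {n : ℕ} {hn : 0 < n} {x : Fin n → D} (h : Function.Injective x) :
    ERelP S D n hn x x := (hD.1 n hn).2.2.1 x h

lemma E_symm {n : ℕ} {hn : 0 < n} {x y : Fin n → D} (h : ERelP S D n hn x y) :
    ERelP S D n hn y x := (hD.1 n hn).2.2.2.1 x y h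

lemma E_trans {n : ℕ} {hn : 0 < n} {x y z : Fin n → D} (h : ERelP S D n hn x y)
    (h' : ERelP S D n hn y z) : ERelP S D n hn x z := (hD.1 n hn).2.2.2.2 x y z h h'

lemma LT_inj {n : ℕ} {hn : n ∈ S} (hn0 : 0 < n) {x y : Fin n → D} (h : LTRelP S D n hn x y) :
    Function.Injective x ∧ Function.Injective y := (hD.2 n hn hn0).1 x y h

lemma LT_inv {n : ℕ} {hn : n ∈ S} (hn0 : 0 < n) {x x' y y' : Fin n → D}
    (h1 : ERelP S D n hn0 x x') (h2 : ERelP S D n hn0 y y') (h : LTRelP S D n hn x y) :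
    LTRelP S D n hn x' y' := (hD.2 n hn hn0).2.1 x x' y y' h1 h2 h

lemma LT_notE {n : ℕ} {hn : n ∈ S} (hn0 : 0 < n) {x y : Fin n → D} (h : LTRelP S D n hn x y) :
    ¬ ERelP S D n hn0 x y := (hD.2 n hn hn0).2.2.1 x y h

lemma LT_trans {n : ℕ} {hn : n ∈ S} (hn0 : 0 < n) {x y z : Fin n → D}
    (h : LTRelP S D n hn x y) (h' : LTRelP S D n hn y z) : LTRelP S D n hn x z :=
  (hD.2 n hn hn0).2.2.2.1 x y z h h'

lemma LT_total {n : ℕ} {hn : n ∈ S} (hn0 : 0 < n) {x y : Fin n → D}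
    (hx : Function.Injective x) (hy : Function.Injective y) (h : ¬ ERelP S D n hn0 x y) :
    LTRelP S D n hn x y ∨ LTRelP S D n hn y x := (hD.2 n hn hn0).2.2.2.2 x y hx hy h

end Accessors

section Amalgam
variable {S : Set ℕ} {A B C : Type u} [iA : (LP S).Structure A] [iB : (LP S).Structure B]
  [iC : (LP S).Structure C]

/-- The underlying type of the amalgam. -/
@[reducible] def Amalg (g : A ↪[LP S] C) : Type u := B ⊕ {c : C // c ∉ Set.range g}

/-- Inclusion of `B` into the amalgam. -/
def ιB (g : A ↪[LP S] C) : B → Amalg (B := B) g := Sum.inl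

open Classical in
/-- Inclusion of `C` into the amalgam. -/
noncomputable def ιC (f : A ↪[LP S] B) (g : A ↪[LP S] C) : C → Amalg (B := B) g :=
  fun c => if h : c ∈ Set.range g then Sum.inl (f (Set.mem_range.1 h).choose) else Sum.inr ⟨c, h⟩

variable (f : A ↪[LP S] B) (g : A ↪[LP S] C)

lemma ιB_inj : Function.Injective (ιB (B := B) g) := Sum.inl_injective

lemma ιC_comm (a : A) : ιC f g (g a) = ιB g (f a) := by
  have h : g a ∈ Set.range g := ⟨a, rfl⟩
  have : h.choose = a := g.injective h.choose_spec
  simp [ιC, dif_pos h, this, ιB]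

lemma ιC_inj : Function.Injective (ιC f g) := by
  intro c₁ c₂ h
  unfold ιC at h
  by_cases h₁ : c₁ ∈ Set.range g <;> by_cases h₂ : c₂ ∈ Set.range g
  · rw [dif_pos h₁, dif_pos h₂] at h
    have := f.injective (Sum.inl_injective h)
    rw [← h₁.choose_spec, ← h₂.choose_spec, this]
  · rw [dif_pos h₁, dif_neg h₂] at h; exact absurd h (by simp)
  · rw [dif_neg h₁, dif_pos h₂] at h; exact absurd h (by simp)
  · rw [dif_neg h₁, dif_neg h₂] at h
    exact Subtype.mk_eq_mk.1 (Sum.inr_injective h)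

lemma bothRanges {n : ℕ} {b : Fin n → B} {c : Fin n → C}
    (h : ιB g ∘ b = ιC f g ∘ c) : ∃ a : Fin n → A, b = f ∘ a ∧ c = g ∘ a := by
  have hr : ∀ i, c i ∈ Set.range g := by
    intro i
    by_contra hc
    have := congrFun h i
    simp only [Function.comp_apply, ιB, ιC, dif_neg hc] at this
    exact absurd this (by simp)
  refine ⟨fun i => (hr i).choose, ?_, ?_⟩
  · funext i
    have := congrFun h i
    simp only [Function.comp_apply, ιB, ιC, dif_pos (hr i)] at this
    exact Sum.inl_injective this
  · funext i
    exact ((hr i).choose_spec).symm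

end Amalgam
section EQsec
variable {S : Set ℕ} {A B C : Type u} [iA : (LP S).Structure A] [iB : (LP S).Structure B]
  [iC : (LP S).Structure C]

lemma inj_of_comp {α β : Type*} {ι : α → β} {n : ℕ} {a : Fin n → α}
    (h : Function.Injective (ι ∘ a)) : Function.Injective a :=
  fun i j hij => h (show (ι ∘ a) i = (ι ∘ a) j by simp only [Function.comp_apply, hij])

lemma comp_perm_one {α : Type*} {n : ℕ} (h : Fin n → α) :
    h ∘ ⇑(1 : Equiv.Perm (Fin n)) = h := by
  funext i; simp

variable (f : A ↪[LP S] B) (g : A ↪[LP S] C)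

lemma cancel_ιB {n : ℕ} {a b : Fin n → B} (h : ιB (B := B) g ∘ a = ιB g ∘ b) : a = b :=
  funext fun i => ιB_inj g (congrFun h i)

lemma cancel_ιC {n : ℕ} {a b : Fin n → C} (h : ιC f g ∘ a = ιC f g ∘ b) : a = b :=
  funext fun i => ιC_inj f g (congrFun h i)

lemma EC_EB {n : ℕ} {hn : 0 < n} {u v : Fin n → A}
    (h : ERelP S C n hn (g ∘ u) (g ∘ v)) : ERelP S B n hn (f ∘ u) (f ∘ v) :=
  (emb_E f hn u v).2 ((emb_E g hn u v).1 h)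

lemma EB_EC {n : ℕ} {hn : 0 < n} {u v : Fin n → A}
    (h : ERelP S B n hn (f ∘ u) (f ∘ v)) : ERelP S C n hn (g ∘ u) (g ∘ v) :=
  (emb_E g hn u v).2 ((emb_E f hn u v).1 h)

lemma LTC_LTB {n : ℕ} {hn : n ∈ S} {u v : Fin n → A}
    (h : LTRelP S C n hn (g ∘ u) (g ∘ v)) : LTRelP S B n hn (f ∘ u) (f ∘ v) :=
  (emb_LT f hn u v).2 ((emb_LT g hn u v).1 h)

lemma LTB_LTC {n : ℕ} {hn : n ∈ S} {u v : Fin n → A}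
    (h : LTRelP S B n hn (f ∘ u) (f ∘ v)) : LTRelP S C n hn (g ∘ u) (g ∘ v) :=
  (emb_LT g hn u v).2 ((emb_LT f hn u v).1 h)

/-- The amalgamated `E_n` relation on the amalgam. -/
def EQ (n : ℕ) (hn : 0 < n) (x y : Fin n → Amalg (B := B) g) : Prop :=
  (Function.Injective x ∧ Function.Injective y) ∧
  ((∃ σ : Equiv.Perm (Fin n), y = x ∘ ⇑σ) ∨
   (∃ a b, x = ιB g ∘ a ∧ y = ιB g ∘ b ∧ ERelP S B n hn a b) ∨
   (∃ a b, x = ιC f g ∘ a ∧ y = ιC f g ∘ b ∧ ERelP S C n hn a b) ∨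
   (∃ a b m, x = ιB g ∘ a ∧ y = ιC f g ∘ b ∧
     ERelP S B n hn a (f ∘ m) ∧ ERelP S C n hn (g ∘ m) b) ∨
   (∃ a b m, x = ιC f g ∘ a ∧ y = ιB g ∘ b ∧
     ERelP S C n hn a (g ∘ m) ∧ ERelP S B n hn (f ∘ m) b))

lemma EQ_inj {n : ℕ} {hn : 0 < n} {x y : Fin n → Amalg (B := B) g} (h : EQ f g n hn x y) :
    Function.Injective x ∧ Function.Injective y := h.1

lemma EQ_refl {n : ℕ} {hn : 0 < n} {x : Fin n → Amalg (B := B) g}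
    (hx : Function.Injective x) : EQ f g n hn x x :=
  ⟨⟨hx, hx⟩, Or.inl ⟨1, (comp_perm_one x).symm⟩⟩

variable (hA : IsKPStruct S A) (hB : IsKPStruct S B) (hC : IsKPStruct S C)

section withHyps
include hB hC

lemma EQ_perm {n : ℕ} {hn : 0 < n} {x y : Fin n → Amalg (B := B) g}
    (σ τ : Equiv.Perm (Fin n)) (h : EQ f g n hn x y) : EQ f g n hn (x ∘ ⇑σ) (y ∘ ⇑τ) := by
  obtain ⟨⟨hx, hy⟩, hd⟩ := h
  refine ⟨⟨hx.comp σ.injective, hy.comp τ.injective⟩, ?_⟩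
  rcases hd with ⟨ρ, rfl⟩ | ⟨a, b, rfl, rfl, h⟩ | ⟨a, b, rfl, rfl, h⟩ |
    ⟨a, b, m, rfl, rfl, h1, h2⟩ | ⟨a, b, m, rfl, rfl, h1, h2⟩
  · refine Or.inl ⟨σ⁻¹ * (ρ * τ), ?_⟩
    funext i; simp
  · exact Or.inr (Or.inl ⟨a ∘ ⇑σ, b ∘ ⇑τ, rfl, rfl, E_perm hB σ τ h⟩)
  · exact Or.inr (Or.inr (Or.inl ⟨a ∘ ⇑σ, b ∘ ⇑τ, rfl, rfl, E_perm hC σ τ h⟩))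
  · refine Or.inr (Or.inr (Or.inr (Or.inl ⟨a ∘ ⇑σ, b ∘ ⇑τ, m, rfl, rfl, ?_, ?_⟩)))
    · have := E_perm hB σ 1 h1; rwa [comp_perm_one] at this
    · have := E_perm hC 1 τ h2; rwa [comp_perm_one] at this
  · refine Or.inr (Or.inr (Or.inr (Or.inr ⟨a ∘ ⇑σ, b ∘ ⇑τ, m, rfl, rfl, ?_, ?_⟩)))
    · have := E_perm hC σ 1 h1; rwa [comp_perm_one] at this
    · have := E_perm hB 1 τ h2; rwa [comp_perm_one] at this

lemma EQ_symm {n : ℕ} {hn : 0 < n} {x y : Fin n → Amalg (B := B) g}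
    (h : EQ f g n hn x y) : EQ f g n hn y x := by
  obtain ⟨⟨hx, hy⟩, hd⟩ := h
  refine ⟨⟨hy, hx⟩, ?_⟩
  rcases hd with ⟨ρ, rfl⟩ | ⟨a, b, rfl, rfl, h⟩ | ⟨a, b, rfl, rfl, h⟩ |
    ⟨a, b, m, rfl, rfl, h1, h2⟩ | ⟨a, b, m, rfl, rfl, h1, h2⟩
  · refine Or.inl ⟨ρ⁻¹, ?_⟩; funext i; simp
  · exact Or.inr (Or.inl ⟨b, a, rfl, rfl, E_symm hB h⟩)
  · exact Or.inr (Or.inr (Or.inl ⟨b, a, rfl, rfl, E_symm hC h⟩))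
  · exact Or.inr (Or.inr (Or.inr (Or.inr ⟨b, a, m, rfl, rfl, E_symm hC h2, E_symm hB h1⟩)))
  · exact Or.inr (Or.inr (Or.inr (Or.inl ⟨b, a, m, rfl, rfl, E_symm hB h2, E_symm hC h1⟩)))

lemma EQ_reindex_left {n : ℕ} {hn : 0 < n} {x z : Fin n → Amalg (B := B) g}
    (ρ : Equiv.Perm (Fin n)) (h : EQ f g n hn (x ∘ ⇑ρ) z) : EQ f g n hn x z := by
  have := EQ_perm f g hB hC ρ⁻¹ 1 h
  rw [comp_perm_one] at this
  convert this using 2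
  funext i; simp

lemma EQ_reindex_right {n : ℕ} {hn : 0 < n} {x y : Fin n → Amalg (B := B) g}
    (ρ : Equiv.Perm (Fin n)) (h : EQ f g n hn x y) : EQ f g n hn x (y ∘ ⇑ρ) := by
  have := EQ_perm f g hB hC 1 ρ h
  rwa [comp_perm_one] at this

end withHyps

include hA hB hC in
lemma EQ_trans {n : ℕ} {hn : 0 < n} {x y z : Fin n → Amalg (B := B) g}
    (h1full : EQ f g n hn x y) (h2full : EQ f g n hn y z) : EQ f g n hn x z := by
  obtain ⟨⟨hx, hy⟩, h1⟩ := h1full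
  rcases h1 with ⟨ρ, rfl⟩ | h1
  · exact EQ_reindex_left f g hB hC ρ h2full
  obtain ⟨⟨-, hz⟩, h2⟩ := h2full
  rcases h2 with ⟨ρ, rfl⟩ | h2
  · exact EQ_reindex_right f g hB hC ρ ⟨⟨hx, hy⟩, Or.inr h1⟩
  refine ⟨⟨hx, hz⟩, Or.inr ?_⟩
  rcases h1 with ⟨a, b, rfl, rfl, hE⟩ | ⟨a, b, rfl, rfl, hE⟩ |
    ⟨a, b, m, rfl, rfl, hE1, hE2⟩ | ⟨a, b, m, rfl, rfl, hE1, hE2⟩ <;>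
  rcases h2 with ⟨a2, b2, heq, rfl, hE'⟩ | ⟨a2, b2, heq, rfl, hE'⟩ |
    ⟨a2, b2, m', heq, rfl, hE1', hE2'⟩ | ⟨a2, b2, m', heq, rfl, hE1', hE2'⟩
  -- BB then (BB | CC | BC | CB)
  · obtain rfl := cancel_ιB g heq
    exact Or.inl ⟨a, b2, rfl, rfl, E_trans hB hE hE'⟩
  · obtain ⟨m2, hb, ha2⟩ := bothRanges f g heq
    subst hb; subst ha2
    exact Or.inr (Or.inr (Or.inl ⟨a, b2, m2, rfl, rfl, hE, hE'⟩))
  · obtain rfl := cancel_ιB g heq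
    exact Or.inr (Or.inr (Or.inl ⟨a, b2, m', rfl, rfl, E_trans hB hE hE1', hE2'⟩))
  · obtain ⟨m2, hb, ha2⟩ := bothRanges f g heq
    subst hb; subst ha2
    exact Or.inl ⟨a, b2, rfl, rfl,
      E_trans hB hE (E_trans hB (EC_EB f g hE1') hE2')⟩
  -- CC then (BB | CC | BC | CB)
  · obtain ⟨m2, ha2, hb⟩ := bothRanges f g heq.symm
    subst ha2; subst hb
    exact Or.inr (Or.inr (Or.inr ⟨a, b2, m2, rfl, rfl, hE, hE'⟩))
  · obtain rfl := cancel_ιC f g heq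
    exact Or.inr (Or.inl ⟨a, b2, rfl, rfl, E_trans hC hE hE'⟩)
  · obtain ⟨m2, ha2, hb⟩ := bothRanges f g heq.symm
    subst ha2; subst hb
    exact Or.inr (Or.inl ⟨a, b2, rfl, rfl,
      E_trans hC hE (E_trans hC (EB_EC f g hE1') hE2')⟩)
  · obtain rfl := cancel_ιC f g heq
    exact Or.inr (Or.inr (Or.inr ⟨a, b2, m', rfl, rfl, E_trans hC hE hE1', hE2'⟩))
  -- BC then (BB | CC | BC | CB)
  · obtain ⟨m2, ha2, hb⟩ := bothRanges f g heq.symm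
    subst ha2; subst hb
    exact Or.inl ⟨a, b2, rfl, rfl,
      E_trans hB (E_trans hB hE1 (EC_EB f g hE2)) hE'⟩
  · obtain rfl := cancel_ιC f g heq
    exact Or.inr (Or.inr (Or.inl ⟨a, b2, m, rfl, rfl, hE1, E_trans hC hE2 hE'⟩))
  · obtain ⟨m2, ha2, hb⟩ := bothRanges f g heq.symm
    subst ha2; subst hb
    exact Or.inr (Or.inr (Or.inl ⟨a, b2, m', rfl, rfl,
      E_trans hB (E_trans hB hE1 (EC_EB f g hE2)) hE1', hE2'⟩))
  · obtain rfl := cancel_ιC f g heq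
    exact Or.inl ⟨a, b2, rfl, rfl,
      E_trans hB (E_trans hB hE1 (EC_EB f g (E_trans hC hE2 hE1'))) hE2'⟩
  -- CB then (BB | CC | BC | CB)
  · obtain rfl := cancel_ιB g heq
    exact Or.inr (Or.inr (Or.inr ⟨a, b2, m, rfl, rfl, hE1, E_trans hB hE2 hE'⟩))
  · obtain ⟨m2, hb, ha2⟩ := bothRanges f g heq
    subst hb; subst ha2
    exact Or.inr (Or.inl ⟨a, b2, rfl, rfl,
      E_trans hC (E_trans hC hE1 (EB_EC f g hE2)) hE'⟩)
  · obtain rfl := cancel_ιB g heq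
    exact Or.inr (Or.inl ⟨a, b2, rfl, rfl,
      E_trans hC (E_trans hC hE1 (EB_EC f g (E_trans hB hE2 hE1'))) hE2'⟩)
  · obtain ⟨m2, hb, ha2⟩ := bothRanges f g heq
    subst hb; subst ha2
    exact Or.inr (Or.inr (Or.inr ⟨a, b2, m', rfl, rfl,
      E_trans hC (E_trans hC hE1 (EB_EC f g hE2)) hE1', hE2'⟩))

end EQsec
section Restr
variable {S : Set ℕ} {A B C : Type u} [iA : (LP S).Structure A] [iB : (LP S).Structure B]
  [iC : (LP S).Structure C]
variable (f : A ↪[LP S] B) (g : A ↪[LP S] C)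
variable (hA : IsKPStruct S A) (hB : IsKPStruct S B) (hC : IsKPStruct S C)

include hB in
lemma restrB_E {n : ℕ} {hn : 0 < n} {a b : Fin n → B} :
    EQ f g n hn (ιB g ∘ a) (ιB (B := B) g ∘ b) ↔ ERelP S B n hn a b := by
  constructor
  · rintro ⟨⟨hx, hy⟩, hd⟩
    have ha : Function.Injective a := inj_of_comp hx
    rcases hd with ⟨σ, hσ⟩ | ⟨a', b', h1, h2, hE⟩ | ⟨a', b', h1, h2, hE⟩ |
      ⟨a', b', m, h1, h2, hE1, hE2⟩ | ⟨a', b', m, h1, h2, hE1, hE2⟩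
    · have hb : b = a ∘ ⇑σ := funext fun i => ιB_inj g (congrFun hσ i)
      subst hb
      have := E_perm hB 1 σ (E_refl (hn := hn) hB ha)
      rwa [comp_perm_one] at this
    · obtain rfl := cancel_ιB g h1
      obtain rfl := cancel_ιB g h2
      exact hE
    · obtain ⟨m1, ha1, ha1'⟩ := bothRanges f g h1
      obtain ⟨m2, hb2, hb2'⟩ := bothRanges f g h2
      subst ha1; subst ha1'; subst hb2; subst hb2'
      exact EC_EB f g hE
    · obtain rfl := cancel_ιB g h1
      obtain ⟨m2, hb2, hb2'⟩ := bothRanges f g h2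
      subst hb2; subst hb2'
      exact E_trans hB hE1 (EC_EB f g hE2)
    · obtain ⟨m1, ha1, ha1'⟩ := bothRanges f g h1
      obtain rfl := cancel_ιB g h2
      subst ha1; subst ha1'
      exact E_trans hB (EC_EB f g hE1) hE2
  · intro h
    exact ⟨⟨(ιB_inj g).comp (E_inj hB h).1, (ιB_inj g).comp (E_inj hB h).2⟩,
      Or.inr (Or.inl ⟨a, b, rfl, rfl, h⟩)⟩

include hB hC in
lemma restrC_E {n : ℕ} {hn : 0 < n} {a b : Fin n → C} :
    EQ f g n hn (ιC f g ∘ a) (ιC f g ∘ b) ↔ ERelP S C n hn a b := by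
  constructor
  · rintro ⟨⟨hx, hy⟩, hd⟩
    have ha : Function.Injective a := inj_of_comp hx
    rcases hd with ⟨σ, hσ⟩ | ⟨a', b', h1, h2, hE⟩ | ⟨a', b', h1, h2, hE⟩ |
      ⟨a', b', m, h1, h2, hE1, hE2⟩ | ⟨a', b', m, h1, h2, hE1, hE2⟩
    · have hb : b = a ∘ ⇑σ := funext fun i => ιC_inj f g (congrFun hσ i)
      subst hb
      have := E_perm hC 1 σ (E_refl (hn := hn) hC ha)
      rwa [comp_perm_one] at this
    · obtain ⟨m1, ha1, ha1'⟩ := bothRanges f g h1.symm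
      obtain ⟨m2, hb2, hb2'⟩ := bothRanges f g h2.symm
      subst ha1; subst ha1'; subst hb2; subst hb2'
      exact EB_EC f g hE
    · obtain rfl := cancel_ιC f g h1
      obtain rfl := cancel_ιC f g h2
      exact hE
    · obtain ⟨m1, ha1, ha1'⟩ := bothRanges f g h1.symm
      obtain rfl := cancel_ιC f g h2
      subst ha1; subst ha1'
      exact E_trans hC (EB_EC f g hE1) hE2
    · obtain rfl := cancel_ιC f g h1
      obtain ⟨m2, hb2, hb2'⟩ := bothRanges f g h2.symm
      subst hb2; subst hb2'
      exact E_trans hC hE1 (EB_EC f g hE2)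
  · intro h
    exact ⟨⟨(ιC_inj f g).comp (E_inj hC h).1, (ιC_inj f g).comp (E_inj hC h).2⟩,
      Or.inr (Or.inr (Or.inl ⟨a, b, rfl, rfl, h⟩))⟩

include hB hC in
lemma crossQ {n : ℕ} {hn : 0 < n} {u : Fin n → C} {v : Fin n → B}
    (hu : Function.Injective u)
    (h : EQ f g n hn (ιC f g ∘ u) (ιB g ∘ v) ∨ ιC f g ∘ u = ιB (B := B) g ∘ v) :
    ∃ w : Fin n → A, ERelP S C n hn u (g ∘ w) ∧ ERelP S B n hn (f ∘ w) v := by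
  rcases h with ⟨⟨hx, hy⟩, hd⟩ | heq
  · have hv : Function.Injective v := inj_of_comp hy
    rcases hd with ⟨σ, hσ⟩ | ⟨a, b, h1, h2, hE⟩ | ⟨a, b, h1, h2, hE⟩ |
      ⟨a, b, m, h1, h2, hE1, hE2⟩ | ⟨a, b, m, h1, h2, hE1, hE2⟩
    · have hσ' : ιB g ∘ v = ιC f g ∘ (u ∘ ⇑σ) := hσ
      obtain ⟨w, hvw, huw⟩ := bothRanges f g hσ'
      refine ⟨w, ?_, ?_⟩
      · have := E_perm hC 1 σ (E_refl (hn := hn) hC hu)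
        rw [comp_perm_one] at this
        rwa [huw] at this
      · subst hvw; exact E_refl hB (f.injective.comp (inj_of_comp (huw ▸ hu.comp σ.injective)))
    · obtain ⟨w, haw, huw⟩ := bothRanges f g h1.symm
      have hvb : v = b := cancel_ιB g h2
      subst huw; subst haw; subst hvb
      exact ⟨w, E_refl hC hu, hE⟩
    · obtain rfl := cancel_ιC f g h1
      obtain ⟨w, hvw, hbw⟩ := bothRanges f g h2
      subst hvw; subst hbw
      exact ⟨w, hE, E_refl hB (f.injective.comp (inj_of_comp (E_inj hC hE).2))⟩
    · obtain ⟨w1, haw, huw⟩ := bothRanges f g h1.symm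
      obtain ⟨w2, hvw, hbw⟩ := bothRanges f g h2
      subst haw; subst huw; subst hvw; subst hbw
      exact ⟨m, EB_EC f g hE1, EC_EB f g hE2⟩
    · obtain rfl := cancel_ιC f g h1
      obtain rfl := cancel_ιB g h2
      exact ⟨m, hE1, hE2⟩
  · obtain ⟨w, hvw, huw⟩ := bothRanges f g heq.symm
    subst hvw; subst huw
    exact ⟨w, E_refl hC hu, E_refl hB (f.injective.comp (inj_of_comp hu))⟩

end Restr
section LinExt

lemma exists_linext {α : Type u} (r : α → α → Prop)
    (hirr : ∀ a, ¬ Relation.TransGen r a a) :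
    ∃ s : α → α → Prop, IsLinearOrder α s ∧
      ∀ a c, Relation.TransGen r a c → s a c ∧ a ≠ c := by
  have hpo : IsPartialOrder α (fun a c => Relation.TransGen r a c ∨ a = c) :=
    { refl := fun a => Or.inr rfl
      trans := by
        rintro a b c (hab | rfl) hbc
        · rcases hbc with hbc | rfl
          · exact Or.inl (hab.trans hbc)
          · exact Or.inl hab
        · exact hbc
      antisymm := by
        rintro a b (hab | rfl) hba
        · rcases hba with hba | rfl
          · exact absurd (hab.trans hba) (hirr a)
          · rfl
        · rfl }
  obtain ⟨s, hs, hle⟩ := @extend_partialOrder α (fun a c => Relation.TransGen r a c ∨ a = c) hpo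
  exact ⟨s, hs, fun a c h => ⟨hle a c (Or.inl h), fun e => hirr a (e ▸ h)⟩⟩

end LinExt

section Quot
variable {S : Set ℕ} {A B C : Type u} [iA : (LP S).Structure A] [iB : (LP S).Structure B]
  [iC : (LP S).Structure C]
variable (f : A ↪[LP S] B) (g : A ↪[LP S] C)
variable (hA : IsKPStruct S A) (hB : IsKPStruct S B) (hC : IsKPStruct S C)

/-- The setoid of `E_n`-equivalence (extended by equality) on `n`-tuples of the amalgam. -/
def stQ (n : ℕ) (hn0 : 0 < n) : Setoid (Fin n → Amalg (B := B) g) :=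
  ⟨fun x y => EQ f g n hn0 x y ∨ x = y, by
    constructor
    · exact fun x => Or.inr rfl
    · rintro x y (h | rfl)
      · exact Or.inl (EQ_symm f g hB hC h)
      · exact Or.inr rfl
    · rintro x y z (h1 | rfl) (h2 | rfl)
      · exact Or.inl (EQ_trans f g hA hB hC h1 h2)
      · exact Or.inl h1
      · exact Or.inl h2
      · exact Or.inr rfl⟩

/-- The base relation between classes coming from `<_n` on `B`. -/
def LNq (n : ℕ) (hn : n ∈ S) (hn0 : 0 < n)
    (p q : Quotient (stQ f g hA hB hC n hn0)) : Prop :=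
  ∃ a b : Fin n → B, p = Quotient.mk _ (ιB g ∘ a) ∧ q = Quotient.mk _ (ιB g ∘ b) ∧
    LTRelP S B n hn a b

/-- The base relation between classes coming from `<_n` on `C`. -/
def LCq (n : ℕ) (hn : n ∈ S) (hn0 : 0 < n)
    (p q : Quotient (stQ f g hA hB hC n hn0)) : Prop :=
  ∃ a b : Fin n → C, p = Quotient.mk _ (ιC f g ∘ a) ∧ q = Quotient.mk _ (ιC f g ∘ b) ∧
    LTRelP S C n hn a b

lemma mkB_eq {n : ℕ} {hn0 : 0 < n} {a b : Fin n → B} (ha : Function.Injective a)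
    (h : Quotient.mk (stQ f g hA hB hC n hn0) (ιB g ∘ a) = Quotient.mk _ (ιB g ∘ b)) :
    ERelP S B n hn0 a b := by
  have h' : EQ f g n hn0 (ιB g ∘ a) (ιB g ∘ b) ∨ ιB g ∘ a = ιB (B := B) g ∘ b :=
    Quotient.exact h
  rcases h' with h' | h'
  · exact (restrB_E f g hB).1 h'
  · obtain rfl := cancel_ιB g h'
    exact E_refl hB ha

lemma mkC_eq {n : ℕ} {hn0 : 0 < n} {a b : Fin n → C} (ha : Function.Injective a)
    (h : Quotient.mk (stQ f g hA hB hC n hn0) (ιC f g ∘ a) = Quotient.mk _ (ιC f g ∘ b)) :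
    ERelP S C n hn0 a b := by
  have h' : EQ f g n hn0 (ιC f g ∘ a) (ιC f g ∘ b) ∨ ιC f g ∘ a = ιC f g ∘ b :=
    Quotient.exact h
  rcases h' with h' | h'
  · exact (restrC_E f g hB hC).1 h'
  · obtain rfl := cancel_ιC f g h'
    exact E_refl hC ha

lemma mkCB_cross {n : ℕ} {hn0 : 0 < n} {u : Fin n → C} {v : Fin n → B}
    (hu : Function.Injective u)
    (h : Quotient.mk (stQ f g hA hB hC n hn0) (ιC f g ∘ u) = Quotient.mk _ (ιB g ∘ v)) :
    ∃ w : Fin n → A, ERelP S C n hn0 u (g ∘ w) ∧ ERelP S B n hn0 (f ∘ w) v :=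
  crossQ f g hB hC hu (Quotient.exact h)

lemma mkBC_cross {n : ℕ} {hn0 : 0 < n} {v : Fin n → B} {u : Fin n → C}
    (hv : Function.Injective v)
    (h : Quotient.mk (stQ f g hA hB hC n hn0) (ιB g ∘ v) = Quotient.mk _ (ιC f g ∘ u)) :
    ∃ w : Fin n → A, ERelP S B n hn0 v (f ∘ w) ∧ ERelP S C n hn0 (g ∘ w) u := by
  have h' : EQ f g n hn0 (ιC f g ∘ u) (ιB g ∘ v) ∨ ιC f g ∘ u = ιB (B := B) g ∘ v :=
    Quotient.exact h.symm
  rcases h' with h' | h'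
  · obtain ⟨w, h1, h2⟩ := crossQ f g hB hC (inj_of_comp (EQ_inj f g h').1) (Or.inl h')
    exact ⟨w, E_symm hB h2, E_symm hC h1⟩
  · obtain ⟨w, hvw, huw⟩ := bothRanges f g h'.symm
    subst hvw; subst huw
    exact ⟨w, E_refl hB hv, E_refl hC (g.injective.comp (inj_of_comp hv))⟩

lemma LNq_trans {n : ℕ} {hn : n ∈ S} {hn0 : 0 < n}
    {p q r : Quotient (stQ f g hA hB hC n hn0)}
    (h1 : LNq f g hA hB hC n hn hn0 p q) (h2 : LNq f g hA hB hC n hn hn0 q r) :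
    LNq f g hA hB hC n hn hn0 p r := by
  obtain ⟨a, b, rfl, hq, hab⟩ := h1
  obtain ⟨a', b', hq', rfl, ha'b'⟩ := h2
  have hE : ERelP S B n hn0 b a' :=
    mkB_eq f g hA hB hC (LT_inj hB hn0 hab).2 (hq.symm.trans hq')
  have hab' : LTRelP S B n hn a a' :=
    LT_inv hB hn0 (E_refl hB (LT_inj hB hn0 hab).1) hE hab
  exact ⟨a, b', rfl, rfl, LT_trans hB hn0 hab' ha'b'⟩

lemma LCq_trans {n : ℕ} {hn : n ∈ S} {hn0 : 0 < n}
    {p q r : Quotient (stQ f g hA hB hC n hn0)}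
    (h1 : LCq f g hA hB hC n hn hn0 p q) (h2 : LCq f g hA hB hC n hn hn0 q r) :
    LCq f g hA hB hC n hn hn0 p r := by
  obtain ⟨a, b, rfl, hq, hab⟩ := h1
  obtain ⟨a', b', hq', rfl, ha'b'⟩ := h2
  have hE : ERelP S C n hn0 b a' :=
    mkC_eq f g hA hB hC (LT_inj hC hn0 hab).2 (hq.symm.trans hq')
  have hab' : LTRelP S C n hn a a' :=
    LT_inv hC hn0 (E_refl hC (LT_inj hC hn0 hab).1) hE hab
  exact ⟨a, b', rfl, rfl, LT_trans hC hn0 hab' ha'b'⟩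

lemma LCq_to_LNq {n : ℕ} {hn : n ∈ S} {hn0 : 0 < n}
    {p q : Quotient (stQ f g hA hB hC n hn0)}
    (hp : ∃ a0 : Fin n → B, p = Quotient.mk _ (ιB g ∘ a0))
    (hq : ∃ b0 : Fin n → B, q = Quotient.mk _ (ιB g ∘ b0))
    (h : LCq f g hA hB hC n hn hn0 p q) : LNq f g hA hB hC n hn hn0 p q := by
  obtain ⟨u, v, rfl, rfl, huv⟩ := h
  obtain ⟨a0, hp⟩ := hp
  obtain ⟨b0, hq⟩ := hq
  obtain ⟨w1, hw1c, hw1b⟩ := mkCB_cross f g hA hB hC (LT_inj hC hn0 huv).1 hp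
  obtain ⟨w2, hw2c, hw2b⟩ := mkCB_cross f g hA hB hC (LT_inj hC hn0 huv).2 hq
  have hlt : LTRelP S C n hn (g ∘ w1) (g ∘ w2) := LT_inv hC hn0 hw1c hw2c huv
  have hltB : LTRelP S B n hn (f ∘ w1) (f ∘ w2) := LTC_LTB f g hlt
  have hw1inj : Function.Injective w1 := inj_of_comp (E_inj hC hw1c).2
  have hw2inj : Function.Injective w2 := inj_of_comp (E_inj hC hw2c).2
  refine ⟨f ∘ w1, f ∘ w2, ?_, ?_, hltB⟩
  · refine Quotient.sound (Or.inl ⟨⟨(ιC_inj f g).comp (LT_inj hC hn0 huv).1,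
      (ιB_inj g).comp (f.injective.comp hw1inj)⟩,
      Or.inr (Or.inr (Or.inr (Or.inr ⟨u, f ∘ w1, w1, rfl, rfl, hw1c, E_refl hB (f.injective.comp hw1inj)⟩)))⟩)
  · exact Quotient.sound (Or.inl ⟨⟨(ιC_inj f g).comp (LT_inj hC hn0 huv).2,
      (ιB_inj g).comp (f.injective.comp hw2inj)⟩,
      Or.inr (Or.inr (Or.inr (Or.inr ⟨v, f ∘ w2, w2, rfl, rfl, hw2c, E_refl hB (f.injective.comp hw2inj)⟩)))⟩)

lemma LNq_to_LCq {n : ℕ} {hn : n ∈ S} {hn0 : 0 < n}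
    {p q : Quotient (stQ f g hA hB hC n hn0)}
    (hp : ∃ a0 : Fin n → C, p = Quotient.mk _ (ιC f g ∘ a0))
    (hq : ∃ b0 : Fin n → C, q = Quotient.mk _ (ιC f g ∘ b0))
    (h : LNq f g hA hB hC n hn hn0 p q) : LCq f g hA hB hC n hn hn0 p q := by
  obtain ⟨u, v, rfl, rfl, huv⟩ := h
  obtain ⟨a0, hp⟩ := hp
  obtain ⟨b0, hq⟩ := hq
  obtain ⟨w1, hw1b, hw1c⟩ := mkBC_cross f g hA hB hC (LT_inj hB hn0 huv).1 hp
  obtain ⟨w2, hw2b, hw2c⟩ := mkBC_cross f g hA hB hC (LT_inj hB hn0 huv).2 hq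
  have hlt : LTRelP S B n hn (f ∘ w1) (f ∘ w2) := LT_inv hB hn0 hw1b hw2b huv
  have hltC : LTRelP S C n hn (g ∘ w1) (g ∘ w2) := LTB_LTC f g hlt
  have hw1inj : Function.Injective w1 := inj_of_comp (E_inj hB hw1b).2
  have hw2inj : Function.Injective w2 := inj_of_comp (E_inj hB hw2b).2
  refine ⟨g ∘ w1, g ∘ w2, ?_, ?_, hltC⟩
  · refine Quotient.sound (Or.inl ⟨⟨(ιB_inj g).comp (LT_inj hB hn0 huv).1,
      (ιC_inj f g).comp (g.injective.comp hw1inj)⟩,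
      Or.inr (Or.inr (Or.inr (Or.inl ⟨u, g ∘ w1, w1, rfl, rfl, hw1b, E_refl hC (g.injective.comp hw1inj)⟩)))⟩)
  · exact Quotient.sound (Or.inl ⟨⟨(ιB_inj g).comp (LT_inj hB hn0 huv).2,
      (ιC_inj f g).comp (g.injective.comp hw2inj)⟩,
      Or.inr (Or.inr (Or.inr (Or.inl ⟨v, g ∘ w2, w2, rfl, rfl, hw2b, E_refl hC (g.injective.comp hw2inj)⟩)))⟩)

lemma Bq_irrefl {n : ℕ} {hn : n ∈ S} {hn0 : 0 < n}
    (p : Quotient (stQ f g hA hB hC n hn0)) :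
    ¬ Relation.TransGen (fun p q => LNq f g hA hB hC n hn hn0 p q ∨
        LCq f g hA hB hC n hn hn0 p q) p p := by
  set LN := LNq f g hA hB hC n hn hn0 with hLN
  set LC := LCq f g hA hB hC n hn hn0 with hLC
  intro hp
  have key : ∀ q, Relation.TransGen (fun p q => LN p q ∨ LC p q) p q →
      (LN p q ∨ LC p q ∨ (∃ c, LN p c ∧ LC c q) ∨ (∃ c, LC p c ∧ LN c q)) := by
    intro q hq
    induction hq with
    | single h =>
      rcases h with h | h
      · exact Or.inl h
      · exact Or.inr (Or.inl h)
    | tail _ hstep ih =>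
      rename_i q r _
      rcases hstep with hstep | hstep
      · rcases ih with ih | ih | ⟨c, h1, h2⟩ | ⟨c, h1, h2⟩
        · exact Or.inl (LNq_trans f g hA hB hC ih hstep)
        · exact Or.inr (Or.inr (Or.inr ⟨q, ih, hstep⟩))
        · -- LN p c, LC c q, LN q r : convert LC c q to LN c q
          have hcB : ∃ b0, c = Quotient.mk _ (ιB g ∘ b0) := by
            obtain ⟨a, b, _, hc, h⟩ := h1; exact ⟨b, hc⟩
          have hqB : ∃ b0, q = Quotient.mk _ (ιB g ∘ b0) := by
            obtain ⟨a, b, hq', _, h⟩ := hstep; exact ⟨a, hq'⟩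
          have := LCq_to_LNq f g hA hB hC hcB hqB h2
          exact Or.inl (LNq_trans f g hA hB hC (LNq_trans f g hA hB hC h1 this) hstep)
        · exact Or.inr (Or.inr (Or.inr ⟨c, h1, LNq_trans f g hA hB hC h2 hstep⟩))
      · rcases ih with ih | ih | ⟨c, h1, h2⟩ | ⟨c, h1, h2⟩
        · exact Or.inr (Or.inr (Or.inl ⟨q, ih, hstep⟩))
        · exact Or.inr (Or.inl (LCq_trans f g hA hB hC ih hstep))
        · exact Or.inr (Or.inr (Or.inl ⟨c, h1, LCq_trans f g hA hB hC h2 hstep⟩))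
        · -- LC p c, LN c q, LC q r : convert LN c q to LC c q
          have hcC : ∃ b0, c = Quotient.mk _ (ιC f g ∘ b0) := by
            obtain ⟨a, b, _, hc, h⟩ := h1; exact ⟨b, hc⟩
          have hqC : ∃ b0, q = Quotient.mk _ (ιC f g ∘ b0) := by
            obtain ⟨a, b, hq', _, h⟩ := hstep; exact ⟨a, hq'⟩
          have := LNq_to_LCq f g hA hB hC hcC hqC h2
          exact Or.inr (Or.inl (LCq_trans f g hA hB hC (LCq_trans f g hA hB hC h1 this) hstep))
  have hLNirr : ∀ q, ¬ LN q q := by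
    rintro q ⟨a, b, hq1, hq2, hab⟩
    have hE : ERelP S B n hn0 a b :=
      mkB_eq f g hA hB hC (LT_inj hB hn0 hab).1 (hq1.symm.trans hq2)
    exact LT_notE hB hn0 hab hE
  have hLCirr : ∀ q, ¬ LC q q := by
    rintro q ⟨a, b, hq1, hq2, hab⟩
    have hE : ERelP S C n hn0 a b :=
      mkC_eq f g hA hB hC (LT_inj hC hn0 hab).1 (hq1.symm.trans hq2)
    exact LT_notE hC hn0 hab hE
  rcases key p hp with h | h | ⟨c, h1, h2⟩ | ⟨c, h1, h2⟩
  · exact hLNirr p h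
  · exact hLCirr p h
  · -- LN p c, LC c p : c, p are B-classes
    have hcB : ∃ b0, c = Quotient.mk _ (ιB g ∘ b0) := by
      obtain ⟨a, b, _, hc, h⟩ := h1; exact ⟨b, hc⟩
    have hpB : ∃ b0, p = Quotient.mk _ (ιB g ∘ b0) := by
      obtain ⟨a, b, hq', _, h⟩ := h1; exact ⟨a, hq'⟩
    have := LCq_to_LNq f g hA hB hC hcB hpB h2
    exact hLNirr p (LNq_trans f g hA hB hC h1 this)
  · have hcC : ∃ b0, c = Quotient.mk _ (ιC f g ∘ b0) := by
      obtain ⟨a, b, _, hc, h⟩ := h1; exact ⟨b, hc⟩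
    have hpC : ∃ b0, p = Quotient.mk _ (ιC f g ∘ b0) := by
      obtain ⟨a, b, hq', _, h⟩ := h1; exact ⟨a, hq'⟩
    have := LNq_to_LCq f g hA hB hC hcC hpC h2
    exact hLCirr p (LCq_trans f g hA hB hC h1 this)

end Quot
section ExistsSn
variable {S : Set ℕ} {A B C : Type u} [iA : (LP S).Structure A] [iB : (LP S).Structure B]
  [iC : (LP S).Structure C]
variable (f : A ↪[LP S] B) (g : A ↪[LP S] C)
variable (hA : IsKPStruct S A) (hB : IsKPStruct S B) (hC : IsKPStruct S C)

include hA hB hC in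
lemma exists_sn (n : ℕ) (hn : n ∈ S) (hn0 : 0 < n) :
    ∃ s' : (Fin n → Amalg (B := B) g) → (Fin n → Amalg (B := B) g) → Prop,
      (∀ x y, s' x y → Function.Injective x ∧ Function.Injective y) ∧
      (∀ x x' y y', EQ f g n hn0 x x' → EQ f g n hn0 y y' → s' x y → s' x' y') ∧
      (∀ x y, s' x y → ¬ EQ f g n hn0 x y) ∧
      (∀ x y z, s' x y → s' y z → s' x z) ∧
      (∀ x y, Function.Injective x → Function.Injective y → ¬ EQ f g n hn0 x y →
        s' x y ∨ s' y x) ∧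
      (∀ a b : Fin n → B, LTRelP S B n hn a b ↔ s' (ιB g ∘ a) (ιB g ∘ b)) ∧
      (∀ a b : Fin n → C, LTRelP S C n hn a b ↔ s' (ιC f g ∘ a) (ιC f g ∘ b)) := by
  obtain ⟨s, hlin, hext⟩ := exists_linext
    (fun p q => LNq f g hA hB hC n hn hn0 p q ∨ LCq f g hA hB hC n hn hn0 p q)
    (fun p => Bq_irrefl f g hA hB hC p)
  have htrans := hlin.toIsPartialOrder.toIsPreorder.toIsTrans.trans
  have hanti := hlin.toIsPartialOrder.toAntisymm.antisymm
  have htot := hlin.toTotal.total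
  set mk : (Fin n → Amalg (B := B) g) → Quotient (stQ f g hA hB hC n hn0) :=
    Quotient.mk (stQ f g hA hB hC n hn0) with hmk
  have hsound : ∀ {x y}, EQ f g n hn0 x y → mk x = mk y :=
    fun h => Quotient.sound (Or.inl h)
  have hne : ∀ {x y}, Function.Injective x → ¬ EQ f g n hn0 x y → mk x ≠ mk y := by
    intro x y hx hnE heq
    have h' : EQ f g n hn0 x y ∨ x = y := Quotient.exact heq
    rcases h' with h' | rfl
    · exact hnE h'
    · exact hnE (EQ_refl f g hx)
  refine ⟨fun x y => (Function.Injective x ∧ Function.Injective y) ∧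
    ¬ EQ f g n hn0 x y ∧ s (mk x) (mk y), ?_, ?_, ?_, ?_, ?_, ?_, ?_⟩
  · exact fun x y h => h.1
  · rintro x x' y y' hxx' hyy' ⟨⟨hx, hy⟩, hnE, hs⟩
    refine ⟨⟨(EQ_inj f g hxx').2, (EQ_inj f g hyy').2⟩, ?_, ?_⟩
    · intro hE
      exact hnE (EQ_trans f g hA hB hC hxx' (EQ_trans f g hA hB hC hE
        (EQ_symm f g hB hC hyy')))
    · rwa [← hsound hxx', ← hsound hyy']
  · exact fun x y h => h.2.1
  · rintro x y z ⟨⟨hx, hy⟩, hnE, hs⟩ ⟨⟨-, hz⟩, hnE', hs'⟩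
    refine ⟨⟨hx, hz⟩, ?_, htrans _ _ _ hs hs'⟩
    intro hE
    have hzx : mk z = mk x := (hsound hE).symm
    rw [hzx] at hs'
    have heq : mk x = mk y := hanti _ _ hs hs'
    have h' : EQ f g n hn0 x y ∨ x = y := Quotient.exact heq
    rcases h' with h' | rfl
    · exact hnE h'
    · exact hnE (EQ_refl f g hx)
  · intro x y hx hy hnE
    rcases htot (mk x) (mk y) with h | h
    · exact Or.inl ⟨⟨hx, hy⟩, hnE, h⟩
    · exact Or.inr ⟨⟨hy, hx⟩, fun hE => hnE (EQ_symm f g hB hC hE), h⟩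
  · intro a b
    constructor
    · intro hab
      refine ⟨⟨(ιB_inj g).comp (LT_inj hB hn0 hab).1, (ιB_inj g).comp (LT_inj hB hn0 hab).2⟩,
        fun h => LT_notE hB hn0 hab ((restrB_E f g hB).1 h), ?_⟩
      exact (hext _ _ (Relation.TransGen.single (Or.inl ⟨a, b, rfl, rfl, hab⟩))).1
    · rintro ⟨⟨hx, hy⟩, hnE, hs⟩
      have ha := inj_of_comp hx
      have hb := inj_of_comp hy
      have hnEB : ¬ ERelP S B n hn0 a b := fun h => hnE ((restrB_E f g hB).2 h)
      rcases LT_total hB hn0 ha hb hnEB with h | h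
      · exact h
      · exfalso
        obtain ⟨hs', hne'⟩ := hext _ _
          (Relation.TransGen.single (Or.inl (⟨b, a, rfl, rfl, h⟩ :
            LNq f g hA hB hC n hn hn0 (mk (ιB g ∘ b)) (mk (ιB g ∘ a)))))
        exact hne' (hanti _ _ hs' hs)
  · intro a b
    constructor
    · intro hab
      refine ⟨⟨(ιC_inj f g).comp (LT_inj hC hn0 hab).1,
        (ιC_inj f g).comp (LT_inj hC hn0 hab).2⟩,
        fun h => LT_notE hC hn0 hab ((restrC_E f g hB hC).1 h), ?_⟩
      exact (hext _ _ (Relation.TransGen.single (Or.inr ⟨a, b, rfl, rfl, hab⟩))).1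
    · rintro ⟨⟨hx, hy⟩, hnE, hs⟩
      have ha := inj_of_comp hx
      have hb := inj_of_comp hy
      have hnEC : ¬ ERelP S C n hn0 a b := fun h => hnE ((restrC_E f g hB hC).2 h)
      rcases LT_total hC hn0 ha hb hnEC with h | h
      · exact h
      · exfalso
        obtain ⟨hs', hne'⟩ := hext _ _
          (Relation.TransGen.single (Or.inr (⟨b, a, rfl, rfl, h⟩ :
            LCq f g hA hB hC n hn hn0 (mk (ιC f g ∘ b)) (mk (ιC f g ∘ a)))))
        exact hne' (hanti _ _ hs' hs)

end ExistsSn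
section QStructSec
variable {S : Set ℕ} {A B C : Type u} [iA : (LP S).Structure A] [iB : (LP S).Structure B]
  [iC : (LP S).Structure C]
variable (f : A ↪[LP S] B) (g : A ↪[LP S] C)

/-- The `L_P`-structure on the amalgam, given a choice of order relations. -/
noncomputable def QStruct
    (sFam : ∀ n, n ∈ S → (Fin n → Amalg (B := B) g) → (Fin n → Amalg (B := B) g) → Prop) :
    (LP S).Structure (Amalg (B := B) g) where
  funMap := fun {k} F _ => F.elim
  RelMap := fun {k} r t =>
    Sum.rec
      (fun e => EQ f g e.1 e.2.1
        (fun i => t (Fin.cast e.2.2.symm (Fin.castAdd e.1 i)))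
        (fun i => t (Fin.cast e.2.2.symm (Fin.natAdd e.1 i))))
      (fun e => sFam e.1 e.2.1
        (fun i => t (Fin.cast e.2.2.symm (Fin.castAdd e.1 i)))
        (fun i => t (Fin.cast e.2.2.symm (Fin.natAdd e.1 i))))
      r

variable (sFam : ∀ n, n ∈ S → (Fin n → Amalg (B := B) g) → (Fin n → Amalg (B := B) g) → Prop)

lemma ERelP_QStruct {n : ℕ} {hn : 0 < n} (x y : Fin n → Amalg (B := B) g) :
    @ERelP S (Amalg (B := B) g) (QStruct f g sFam) n hn x y ↔ EQ f g n hn x y := by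
  have e1 : (fun i => Fin.append x y (Fin.castAdd n i)) = x :=
    funext fun i => Fin.append_left x y i
  have e2 : (fun i => Fin.append x y (Fin.natAdd n i)) = y :=
    funext fun i => Fin.append_right x y i
  have h : @ERelP S (Amalg (B := B) g) (QStruct f g sFam) n hn x y =
      EQ f g n hn (fun i => Fin.append x y (Fin.castAdd n i))
        (fun i => Fin.append x y (Fin.natAdd n i)) := rfl
  rw [h, e1, e2]

lemma LTRelP_QStruct {n : ℕ} {hn : n ∈ S} (x y : Fin n → Amalg (B := B) g) :
    @LTRelP S (Amalg (B := B) g) (QStruct f g sFam) n hn x y ↔ sFam n hn x y := by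
  have e1 : (fun i => Fin.append x y (Fin.castAdd n i)) = x :=
    funext fun i => Fin.append_left x y i
  have e2 : (fun i => Fin.append x y (Fin.natAdd n i)) = y :=
    funext fun i => Fin.append_right x y i
  have h : @LTRelP S (Amalg (B := B) g) (QStruct f g sFam) n hn x y =
      sFam n hn (fun i => Fin.append x y (Fin.castAdd n i))
        (fun i => Fin.append x y (Fin.natAdd n i)) := rfl
  rw [h, e1, e2]

end QStructSec
section Master
variable {S : Set ℕ}

theorem masterAmalg (hS : ∀ n ∈ S, 3 ≤ n) (M N O : Bundled.{u} (LP S).Structure)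
    (MN : M ↪[LP S] N) (MO : M ↪[LP S] O)
    (hM : M ∈ KP S) (hN : N ∈ KP S) (hO : O ∈ KP S) :
    ∃ (Q : Bundled.{u} (LP S).Structure) (NQ : N ↪[LP S] Q) (OQ : O ↪[LP S] Q),
      Q ∈ KP S ∧ ∀ a : M, NQ (MN a) = OQ (MO a) := by
  obtain ⟨hMfin, hMstr⟩ := hM
  obtain ⟨hNfin, hNstr⟩ := hN
  obtain ⟨hOfin, hOstr⟩ := hO
  have hn0S : ∀ n, n ∈ S → 0 < n := fun n hn => by have := hS n hn; omega
  choose sFam hsFam using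
    (fun n (hn : n ∈ S) => exists_sn MN MO hMstr hNstr hOstr n hn (hn0S n hn))
  letI iQ : (LP S).Structure (Amalg (B := ↥N) MO) := QStruct MN MO sFam
  haveI : Finite ↥N := hNfin
  haveI : Finite ↥O := hOfin
  haveI hQfin : Finite (Amalg (B := ↥N) MO) := by unfold Amalg; infer_instance
  refine ⟨⟨Amalg (B := ↥N) MO, iQ⟩,
    { toFun := ιB MO, inj' := ιB_inj MO,
      map_fun' := fun {k} F _ => F.elim,
      map_rel' := ?_ },
    { toFun := ιC MN MO, inj' := ιC_inj MN MO,
      map_fun' := fun {k} F _ => F.elim,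
      map_rel' := ?_ },
    ⟨hQfin, ?_, ?_⟩, fun a => (ιC_comm MN MO a).symm⟩
  · -- map_rel' for N → Q
    intro k r t
    rcases r with ⟨n, hn0, hk⟩ | ⟨n, hnS, hk⟩
    · subst hk
      rw [← append_decomp t, comp_append]
      exact (ERelP_QStruct MN MO sFam (hn := hn0) _ _).trans (restrB_E MN MO hNstr (hn := hn0))
    · subst hk
      rw [← append_decomp t, comp_append]
      exact (LTRelP_QStruct MN MO sFam _ _).trans
        ((hsFam n hnS).2.2.2.2.2.1 _ _).symm
  · -- map_rel' for O → Q
    intro k r t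
    rcases r with ⟨n, hn0, hk⟩ | ⟨n, hnS, hk⟩
    · subst hk
      rw [← append_decomp t, comp_append]
      exact (ERelP_QStruct MN MO sFam (hn := hn0) _ _).trans (restrC_E MN MO hNstr hOstr (hn := hn0))
    · subst hk
      rw [← append_decomp t, comp_append]
      exact (LTRelP_QStruct MN MO sFam _ _).trans
        ((hsFam n hnS).2.2.2.2.2.2 _ _).symm
  · -- E_n axioms on Q
    intro n hn0
    refine ⟨?_, ?_, ?_, ?_, ?_⟩
    · intro x y h
      exact EQ_inj MN MO ((ERelP_QStruct MN MO sFam x y).1 h)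
    · intro x y σ τ h
      exact (ERelP_QStruct MN MO sFam _ _).2
        (EQ_perm MN MO hNstr hOstr σ τ ((ERelP_QStruct MN MO sFam x y).1 h))
    · intro x hx
      exact (ERelP_QStruct MN MO sFam x x).2 (EQ_refl MN MO hx)
    · intro x y h
      exact (ERelP_QStruct MN MO sFam y x).2
        (EQ_symm MN MO hNstr hOstr ((ERelP_QStruct MN MO sFam x y).1 h))
    · intro x y z h1 h2
      exact (ERelP_QStruct MN MO sFam x z).2
        (EQ_trans MN MO hMstr hNstr hOstr ((ERelP_QStruct MN MO sFam x y).1 h1)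
          ((ERelP_QStruct MN MO sFam y z).1 h2))
  · -- <_n axioms on Q
    intro n hnS hn0
    obtain ⟨p1, p2, p3, p4, p5, -, -⟩ := hsFam n hnS
    refine ⟨?_, ?_, ?_, ?_, ?_⟩
    · intro x y h
      exact p1 x y ((LTRelP_QStruct MN MO sFam x y).1 h)
    · intro x x' y y' hE1 hE2 h
      exact (LTRelP_QStruct MN MO sFam x' y').2
        (p2 x x' y y' ((ERelP_QStruct MN MO sFam x x').1 hE1)
          ((ERelP_QStruct MN MO sFam y y').1 hE2)
          ((LTRelP_QStruct MN MO sFam x y).1 h))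
    · intro x y h hE
      exact p3 x y ((LTRelP_QStruct MN MO sFam x y).1 h)
        ((ERelP_QStruct MN MO sFam x y).1 hE)
    · intro x y z h1 h2
      exact (LTRelP_QStruct MN MO sFam x z).2
        (p4 x y z ((LTRelP_QStruct MN MO sFam x y).1 h1)
          ((LTRelP_QStruct MN MO sFam y z).1 h2))
    · intro x y hx hy hnE
      rcases p5 x y hx hy (fun hE => hnE ((ERelP_QStruct MN MO sFam x y).2 hE)) with h | h
      · exact Or.inl ((LTRelP_QStruct MN MO sFam x y).2 h)
      · exact Or.inr ((LTRelP_QStruct MN MO sFam y x).2 h)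

/-- The empty `L_P`-structure. -/
instance PEmptyStruct (S : Set ℕ) : (LP S).Structure PEmpty.{u + 1} where
  funMap := fun {k} F _ => F.elim
  RelMap := fun {k} _ _ => False

lemma PEmptyIsKP : @IsKPStruct S PEmpty.{u + 1} (PEmptyStruct S) := by
  refine ⟨?_, ?_⟩
  · intro n hn0
    exact ⟨fun x y h => (x ⟨0, hn0⟩).elim, fun x y σ τ h => (x ⟨0, hn0⟩).elim,
      fun x h => (x ⟨0, hn0⟩).elim, fun x y h => (x ⟨0, hn0⟩).elim,
      fun x y z h1 h2 => (x ⟨0, hn0⟩).elim⟩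
  · intro n hn hn0
    exact ⟨fun x y h => (x ⟨0, hn0⟩).elim, fun x x' y y' h1 h2 h => (x ⟨0, hn0⟩).elim,
      fun x y h => (x ⟨0, hn0⟩).elim, fun x y z h1 h2 => (x ⟨0, hn0⟩).elim,
      fun x y hx hy h => (x ⟨0, hn0⟩).elim⟩

lemma PEmpty_mem (hS : ∀ n ∈ S, 3 ≤ n) :
    (⟨PEmpty, PEmptyStruct S⟩ : Bundled.{u} (LP S).Structure) ∈ KP S :=
  ⟨inferInstanceAs (Finite PEmpty.{u + 1}), PEmptyIsKP⟩

/-- The empty embedding. -/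
noncomputable def PEmptyEmb (hS : ∀ n ∈ S, 3 ≤ n) (D : Type*) [iD : (LP S).Structure D] :
    PEmpty.{u + 1} ↪[LP S] D where
  toFun := PEmpty.elim
  inj' := fun a => a.elim
  map_fun' := fun {k} F _ => F.elim
  map_rel' := by
    intro k r t
    rcases r with ⟨n, hn0, hk⟩ | ⟨n, hnS, hk⟩
    · exact (t ⟨0, by omega⟩).elim
    · have := hS n hnS
      exact (t ⟨0, by omega⟩).elim

end Master

/-- `K_P` has the joint embedding property and the amalgamation property. -/
theorem KP_JEP_and_AP (P : Set ℕ) (hP : ∀ n ∈ P, 3 ≤ n) :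
    JointEmbedding (KP P) ∧ Amalgamation (KP P) := by
  constructor
  · intro N hN O hO
    obtain ⟨Q, NQ, OQ, hQ, -⟩ := masterAmalg hP ⟨PEmpty, PEmptyStruct P⟩ N O
      (PEmptyEmb hP ↥N) (PEmptyEmb hP ↥O) (PEmpty_mem hP) hN hO
    exact ⟨Q, hQ, ⟨NQ⟩, ⟨OQ⟩⟩
  · intro M N O MN MO hM hN hO
    obtain ⟨Q, NQ, OQ, hQ, hcomm⟩ := masterAmalg hP M N O MN MO hM hN hO
    refine ⟨Q, NQ, OQ, hQ, ?_⟩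
    ext a
    exact hcomm a
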